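/- Let K be a field and let A be a finite-dimensional split semisimple K-algebra equipped with a symmetrizing form t. Then there exist unique nonzero scalars s_V in K, one for each isomorphism class of simple A-modules V (called the Schur elements of (A,t)), such that t(a) = \sum_V s_V^{-1} \chi_V(a) for all a in A, where the sum runs over the isomorphism classes of simple A-modules and \chi_V(a) denotes the trace of the action of a on V. -/

import Mathlib

section SchurAux

variable {K : Type} [Field K] {A : Type} [Ring A] [Algebra K A]
  {ι : Type} [Fintype ι]
  {V : ι → Type} [∀ i, AddCommGroup (V i)] [∀ i, Module K (V i)]
  [∀ i, Module A (V i)] [∀ i, IsScalarTower K A (V i)]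

/-- Every `A`-endomorphism of `∀ i, V i` is diagonal with scalar entries. -/
lemma schur_aux_diag [DecidableEq ι]
    (hsimple : ∀ i, IsSimpleModule A (V i))
    (hsplit : ∀ i, ∀ f : V i →ₗ[A] V i, ∃ c : K, ∀ v, f v = c • v)
    (hdistinct : ∀ i j, Nonempty (V i ≃ₗ[A] V j) → i = j)
    (g : (∀ i, V i) →ₗ[A] (∀ i, V i)) :
    ∃ c : ι → K, ∀ (x : ∀ i, V i) (i : ι), g x i = c i • x i := by
  have hzero : ∀ (i j : ι), i ≠ j → ∀ w : V j, g (Pi.single j w) i = 0 := by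
    intro i j hij w
    haveI := hsimple i; haveI := hsimple j
    rcases (LinearMap.proj i ∘ₗ g ∘ₗ LinearMap.single A V j).bijective_or_eq_zero with h | h
    · exact absurd (hdistinct j i ⟨LinearEquiv.ofBijective _ h⟩) (Ne.symm hij)
    · simpa using LinearMap.congr_fun h w
  choose c hc using fun i => hsplit i (LinearMap.proj i ∘ₗ g ∘ₗ LinearMap.single A V i)
  refine ⟨c, fun x i => ?_⟩
  conv_lhs => rw [← Finset.univ_sum_single x, map_sum]
  rw [Finset.sum_apply]
  rw [Finset.sum_eq_single i]
  · simpa using hc i (x i)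
  · intro j _ hji
    exact hzero i j (Ne.symm hji) (x j)
  · simp

end SchurAux

section SchurAux2

set_option linter.unusedSectionVars false

variable {K : Type} [Field K] {A : Type} [Ring A] [Algebra K A]
  {ι : Type} [Fintype ι]
  {V : ι → Type} [∀ i, AddCommGroup (V i)] [∀ i, Module K (V i)]
  [∀ i, Module A (V i)] [∀ i, IsScalarTower K A (V i)]

lemma schur_aux_surj [IsSemisimpleRing A] [∀ i, Module.Finite K (V i)]
    (hsimple : ∀ i, IsSimpleModule A (V i))
    (hsplit : ∀ i, ∀ f : V i →ₗ[A] V i, ∃ c : K, ∀ v, f v = c • v)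
    (hdistinct : ∀ i j, Nonempty (V i ≃ₗ[A] V j) → i = j)
    (f : ∀ i, Module.End K (V i)) :
    ∃ a : A, ∀ (i : ι) (w : V i), a • w = f i w := by
  classical
  set M := (∀ i, V i) with hM
  set F : M →ₗ[K] M := LinearMap.pi (fun i => (f i) ∘ₗ LinearMap.proj i) with hF
  have hFapp : ∀ (x : M) (i : ι), F x i = f i (x i) := fun x i => rfl
  -- F commutes with every A-linear endomorphism of M
  have hcommM : ∀ (g : M →ₗ[A] M) (x : M), F (g x) = g (F x) := by
    intro g x
    obtain ⟨c, hc⟩ := schur_aux_diag hsimple hsplit hdistinct g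
    funext i
    rw [hFapp, hc, map_smul, hc]
    rw [hFapp]
  set n := Module.finrank K M with hn
  let b : Module.Basis (Fin n) K M := Module.finBasis K M
  set v : Fin n → M := fun k => b k with hv
  set P : Submodule A (Fin n → M) := Submodule.span A {v} with hP
  obtain ⟨Q, hQ⟩ := exists_isCompl P
  set p : (Fin n → M) →ₗ[A] (Fin n → M) := P.subtype ∘ₗ P.linearProjOfIsCompl Q hQ with hp
  set G : (Fin n → M) →ₗ[K] (Fin n → M) := LinearMap.pi (fun k => F ∘ₗ LinearMap.proj k) with hG
  have hGapp : ∀ (w : Fin n → M) (k : Fin n), G w k = F (w k) := fun w k => rfl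
  have hcomm : ∀ (g : (Fin n → M) →ₗ[A] (Fin n → M)) (w : Fin n → M), G (g w) = g (G w) := by
    intro g w
    have hgdec : ∀ (w : Fin n → M), g w = ∑ l, g (Pi.single l (w l)) := by
      intro w
      conv_lhs => rw [← Finset.univ_sum_single w, map_sum]
    funext k
    rw [hGapp, hgdec w, hgdec (G w), Finset.sum_apply, Finset.sum_apply, map_sum]
    refine Finset.sum_congr rfl fun l _ => ?_
    have := hcommM (LinearMap.proj k ∘ₗ g ∘ₗ LinearMap.single A (fun _ => M) l) (w l)
    simpa [hGapp] using this
  have hvP : v ∈ P := Submodule.mem_span_singleton_self v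
  have hpmem : ∀ w, p w ∈ P := fun w => (P.linearProjOfIsCompl Q hQ w).2
  have hpv : p v = v := by
    have h1 : P.linearProjOfIsCompl Q hQ v = ⟨v, hvP⟩ :=
      Submodule.linearProjOfIsCompl_apply_left hQ ⟨v, hvP⟩
    simp only [hp, LinearMap.coe_comp, Function.comp_apply, h1, Submodule.coe_subtype]
  have hGvP : G v ∈ P := by
    have h2 := hcomm p v
    rw [hpv] at h2
    rw [h2]
    exact hpmem _
  obtain ⟨a, ha⟩ := Submodule.mem_span_singleton.mp hGvP
  have hab : ∀ k, a • b k = F (b k) := by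
    intro k
    have := congrFun ha k
    simpa [hv, hGapp] using this
  have hall : ∀ m : M, a • m = F m := by
    have heq : (Algebra.lsmul K K M a : M →ₗ[K] M) = F := b.ext fun k => hab k
    intro m
    exact LinearMap.congr_fun heq m
  refine ⟨a, fun i w => ?_⟩
  have h3 := congrFun (hall (Pi.single i w)) i
  have h4 : (a • (Pi.single i w : M)) i = a • w := by
    rw [Pi.smul_apply, Pi.single_eq_same]
  rw [h4] at h3
  simpa [hFapp] using h3

lemma schur_aux_inj [IsSemisimpleRing A]
    (hcomplete : ∀ (N : Type) [AddCommGroup N] [Module A N], IsSimpleModule A N →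
      ∃ i, Nonempty (N ≃ₗ[A] V i))
    (a : A) (h : ∀ (i : ι) (w : V i), a • w = 0) : a = 0 := by
  have key : ∀ x : A, a * x = 0 := by
    intro x
    have hx : x ∈ sSup {m : Submodule A A | IsSimpleModule A m} := by
      rw [IsSemisimpleModule.sSup_simples_eq_top]; trivial
    rw [sSup_eq_iSup'] at hx
    refine Submodule.iSup_induction (motive := fun y => a * y = 0) _ hx ?_ (by simp) ?_
    · rintro ⟨W, hW⟩ y hy
      haveI : IsSimpleModule A W := hW
      obtain ⟨i, ⟨e⟩⟩ := hcomplete W inferInstance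
      have h1 : e (a • (⟨y, hy⟩ : W)) = 0 := by
        rw [map_smul]; exact h i _
      have h0 : a • (⟨y, hy⟩ : W) = 0 := by
        rwa [LinearEquiv.map_eq_zero_iff] at h1
      have := congrArg (Subtype.val) h0
      simpa [smul_eq_mul] using this
    · intro y z hy hz
      rw [mul_add, hy, hz, add_zero]
  have := key 1
  simpa using this

end SchurAux2

/-- **Schur elements.** Let `A` be a finite-dimensional split
semisimple algebra over a field `K` with a symmetrizing form `t`, and let
`(V i)_{i : ι}` be a complete set of pairwise non-isomorphic simple `A`-modules.
Then there is a unique family of nonzero scalars `s i ∈ K` (the Schur elements)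
such that `t a = ∑ i, (s i)⁻¹ * χ_{V i}(a)` for all `a ∈ A`, where
`χ_{V i}(a)` is the trace of the action of `a` on `V i`. -/
theorem schur_elements_existence_uniqueness
    (K : Type) [Field K] (A : Type) [Ring A] [Algebra K A] [FiniteDimensional K A]
    -- `A` is semisimple
    [IsSemisimpleRing A]
    -- `t` is a symmetrizing form on `A`
    (t : A →ₗ[K] K)
    (htr : ∀ a b : A, t (a * b) = t (b * a))
    (hnondeg : ∀ a : A, (∀ b : A, t (a * b) = 0) → a = 0)
    -- a complete family of pairwise non-isomorphic simple `A`-modules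
    (ι : Type) [Fintype ι]
    (V : ι → Type) [∀ i, AddCommGroup (V i)] [∀ i, Module K (V i)]
    [∀ i, Module A (V i)] [∀ i, IsScalarTower K A (V i)] [∀ i, Module.Finite K (V i)]
    (hsimple : ∀ i, IsSimpleModule A (V i))
    -- `A` is split: the endomorphisms of each simple module are the scalars in `K`
    (hsplit : ∀ i, ∀ f : V i →ₗ[A] V i, ∃ c : K, ∀ v, f v = c • v)
    (hdistinct : ∀ i j, Nonempty (V i ≃ₗ[A] V j) → i = j)
    (hcomplete : ∀ (N : Type) [AddCommGroup N] [Module A N], IsSimpleModule A N →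
      ∃ i, Nonempty (N ≃ₗ[A] V i)) :
    ∃! s : ι → K, (∀ i, s i ≠ 0) ∧
      ∀ a : A, t a =
        ∑ i, (s i)⁻¹ * LinearMap.trace K (V i) (Algebra.lsmul K K (V i) a) := by
  classical
  -- the algebra map into the product of endomorphism algebras
  set Φ : A →ₐ[K] ∀ i, Module.End K (V i) :=
    Pi.algHom K _ (fun i => Algebra.lsmul K K (V i)) with hΦ
  have hΦapp : ∀ (a : A) (i : ι) (w : V i), Φ a i w = a • w := fun a i w => rfl
  have hΦlsmul : ∀ (a : A) (i : ι), Algebra.lsmul K K (V i) a = Φ a i := fun a i => rfl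
  have hΦinj : Function.Injective Φ := by
    rw [injective_iff_map_eq_zero]
    intro a ha
    refine schur_aux_inj hcomplete a fun i w => ?_
    have h1 : Φ a i = 0 := by rw [ha]; rfl
    calc a • w = Φ a i w := rfl
      _ = 0 := by rw [h1]; rfl
  have hΦsurj : Function.Surjective Φ := by
    intro f
    obtain ⟨a, ha⟩ := schur_aux_surj hsimple hsplit hdistinct f
    exact ⟨a, funext fun i => LinearMap.ext fun w => ha i w⟩
  set Φe : A ≃ₐ[K] ∀ i, Module.End K (V i) := AlgEquiv.ofBijective Φ ⟨hΦinj, hΦsurj⟩ with hΦe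
  have hΦecoe : ∀ a, Φe a = Φ a := fun a => rfl
  -- bases and matrix units
  set d : ι → ℕ := fun i => Module.finrank K (V i) with hd
  set bV : ∀ i, Module.Basis (Fin (d i)) K (V i) := fun i => Module.finBasis K (V i) with hbV
  have hdpos : ∀ i, 0 < d i := by
    intro i
    haveI := IsSimpleModule.nontrivial A (V i)
    exact Module.finrank_pos
  set z : ∀ i, Fin (d i) := fun i => ⟨0, hdpos i⟩ with hz
  set E : ∀ i, Fin (d i) → Fin (d i) → Module.End K (V i) :=
    fun i k l => LinearMap.smulRight ((bV i).coord l) ((bV i) k) with hE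
  have hEapp : ∀ i (k l : Fin (d i)) (w : V i), E i k l w = (bV i).repr w l • bV i k :=
    fun i k l w => rfl
  have hEmul : ∀ i (k l m q : Fin (d i)),
      E i k l * E i m q = if l = m then E i k q else 0 := by
    intro i k l m q
    apply LinearMap.ext
    intro w
    rw [Module.End.mul_apply, hEapp i m q w, map_smul, hEapp i k l]
    by_cases h : l = m
    · subst h
      rw [if_pos rfl, hEapp i k q]
      simp [Module.Basis.repr_self]
    · rw [if_neg h]
      simp [Module.Basis.repr_self, Finsupp.single_apply, Ne.symm h]
  have hEtrace : ∀ i (k l : Fin (d i)),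
      LinearMap.trace K (V i) (E i k l) = if k = l then 1 else 0 := by
    intro i k l
    rw [LinearMap.trace_eq_matrix_trace K (bV i), Matrix.trace]
    have hdiag : ∀ m, (LinearMap.toMatrix (bV i) (bV i) (E i k l)).diag m
        = (if m = l then 1 else 0) * (if k = m then 1 else 0) := by
      intro m
      rw [Matrix.diag_apply, LinearMap.toMatrix_apply, hEapp]
      by_cases h1 : m = l <;> by_cases h2 : k = m <;>
        simp [h1, h2, Module.Basis.repr_self, Finsupp.single_apply]
    rw [Finset.sum_congr rfl fun m _ => hdiag m]
    rw [Finset.sum_eq_single l]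
    · simp
    · intro m _ hm
      simp [hm]
    · simp
  -- the preimages of the "matrix units"
  set u : ∀ i, Fin (d i) → Fin (d i) → A :=
    fun i k l => Φe.symm (Pi.single i (E i k l)) with hu
  have hΦu : ∀ i (k l : Fin (d i)), Φ (u i k l) = Pi.single i (E i k l) := by
    intro i k l
    rw [← hΦecoe]
    exact Φe.apply_symm_apply _
  have humul : ∀ i (k l m q : Fin (d i)),
      u i k l * u i m q = if l = m then u i k q else 0 := by
    intro i k l m q
    have h1 : u i k l * u i m q = Φe.symm (Pi.single i (E i k l) * Pi.single i (E i m q)) := by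
      rw [map_mul]
    rw [h1, ← Pi.single_mul, hEmul]
    by_cases h : l = m
    · rw [if_pos h, if_pos h]
    · rw [if_neg h, if_neg h]
      simp
  -- the scalars
  set c : ι → K := fun i => t (u i (z i) (z i)) with hc
  have h_t_u : ∀ i (k l : Fin (d i)), t (u i k l) = if k = l then c i else 0 := by
    intro i k l
    have h1 : u i k l = u i k (z i) * u i (z i) l := by rw [humul, if_pos rfl]
    have h2 : u i (z i) l * u i k (z i) = if l = k then u i (z i) (z i) else 0 := humul i (z i) l k (z i)
    rw [h1, htr, h2]
    by_cases h : k = l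
    · rw [if_pos h.symm, if_pos h]
    · rw [if_neg (Ne.symm h), if_neg h, map_zero]
  -- decomposition of an arbitrary element in terms of the matrix units
  have hEspan : ∀ i (g : Module.End K (V i)),
      ∑ k, ∑ l, ((bV i).repr (g (bV i l)) k) • E i k l = g := by
    intro i g
    apply (bV i).ext
    intro m
    rw [LinearMap.sum_apply]
    have h1 : ∀ k, (∑ l, ((bV i).repr (g (bV i l)) k) • E i k l) (bV i m)
        = ((bV i).repr (g (bV i m)) k) • bV i k := by
      intro k
      rw [LinearMap.sum_apply]
      rw [Finset.sum_eq_single m]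
      · simp [hEapp, Module.Basis.repr_self]
      · intro l _ hl
        simp [hEapp, Module.Basis.repr_self, Finsupp.single_apply, Ne.symm hl]
      · simp
    rw [Finset.sum_congr rfl fun k _ => h1 k]
    exact (bV i).sum_repr (g (bV i m))
  have hdecomp : ∀ a : A,
      a = ∑ i, ∑ k, ∑ l, ((bV i).repr ((Φ a) i (bV i l)) k) • u i k l := by
    intro a
    have h1 : Φ a = ∑ i, Pi.single i
        (∑ k, ∑ l, ((bV i).repr ((Φ a) i (bV i l)) k) • E i k l) := by
      conv_lhs => rw [← Finset.univ_sum_single (Φ a)]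
      exact Finset.sum_congr rfl fun i _ => by rw [hEspan i]
    calc a = Φe.symm (Φe a) := (Φe.symm_apply_apply a).symm
      _ = Φe.symm (Φ a) := rfl
      _ = ∑ i, ∑ k, ∑ l, ((bV i).repr ((Φ a) i (bV i l)) k) • u i k l := by
          conv_lhs => rw [h1]
          rw [map_sum]
          refine Finset.sum_congr rfl fun i _ => ?_
          have h2 : (Pi.single i (∑ k, ∑ l, ((bV i).repr ((Φ a) i (bV i l)) k) • E i k l)
                : ∀ j, Module.End K (V j))
              = ∑ k, ∑ l, ((bV i).repr ((Φ a) i (bV i l)) k) •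
                  (Pi.single i (E i k l) : ∀ j, Module.End K (V j)) := by
            have e1 : ∀ x : Module.End K (V i),
                (Pi.single i x : ∀ j, Module.End K (V j))
                  = LinearMap.single K (fun j => Module.End K (V j)) i x := fun x => rfl
            rw [e1, map_sum]
            refine Finset.sum_congr rfl fun k _ => ?_
            rw [map_sum]
            refine Finset.sum_congr rfl fun l _ => ?_
            rw [map_smul, e1]
          rw [h2, map_sum]
          refine Finset.sum_congr rfl fun k _ => ?_
          rw [map_sum]
          refine Finset.sum_congr rfl fun l _ => ?_
          rw [map_smul]
  have hmain : ∀ a : A,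
      t a = ∑ i, c i * (LinearMap.trace K (V i)) (Algebra.lsmul K K (V i) a) := by
    intro a
    conv_lhs => rw [hdecomp a]
    rw [map_sum]
    refine Finset.sum_congr rfl fun i _ => ?_
    have htrΦ : (LinearMap.trace K (V i)) (Algebra.lsmul K K (V i) a)
        = ∑ k, (bV i).repr ((Φ a) i (bV i k)) k := by
      rw [hΦlsmul, LinearMap.trace_eq_matrix_trace K (bV i), Matrix.trace]
      refine Finset.sum_congr rfl fun k _ => ?_
      rw [Matrix.diag_apply, LinearMap.toMatrix_apply]
    rw [htrΦ, Finset.mul_sum, map_sum]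
    refine Finset.sum_congr rfl fun k _ => ?_
    rw [map_sum]
    have hterm : ∀ l, t (((bV i).repr ((Φ a) i (bV i l)) k) • u i k l)
        = if k = l then ((bV i).repr ((Φ a) i (bV i l)) k) * c i else 0 := by
      intro l
      rw [map_smul, smul_eq_mul, h_t_u]
      by_cases h : k = l
      · rw [if_pos h, if_pos h]
      · rw [if_neg h, if_neg h, mul_zero]
    rw [Finset.sum_congr rfl fun l _ => hterm l, Finset.sum_ite_eq]
    simp [mul_comm]
  have hc0 : ∀ i, c i ≠ 0 := by
    intro i hci
    have hu0 : u i (z i) (z i) = 0 := by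
      apply hnondeg
      intro bb
      rw [hmain]
      refine Finset.sum_eq_zero fun j _ => ?_
      by_cases hj : j = i
      · subst hj
        rw [hci, zero_mul]
      · have h1 : Algebra.lsmul K K (V j) (u i (z i) (z i) * bb)
            = (Φ (u i (z i) (z i))) j * (Φ bb) j := by
          rw [hΦlsmul, map_mul]
          rfl
        rw [h1, hΦu, Pi.single_eq_of_ne hj, zero_mul, map_zero, mul_zero]
    have h2 : (Pi.single i (E i (z i) (z i)) : ∀ j, Module.End K (V j)) = 0 := by
      rw [← hΦu, hu0, map_zero]
    have h3 := congrFun h2 i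
    rw [Pi.single_eq_same] at h3
    have h4 := LinearMap.congr_fun h3 (bV i (z i))
    rw [hEapp] at h4
    simp [Module.Basis.repr_self] at h4
    exact (bV i).ne_zero (z i) h4
  refine ⟨fun i => (c i)⁻¹, ⟨fun i => inv_ne_zero (hc0 i), fun a => ?_⟩, ?_⟩
  · rw [hmain a]
    exact Finset.sum_congr rfl fun i _ => by rw [inv_inv]
  · rintro s' ⟨hs'0, hs'⟩
    funext j
    have hval : ∀ i : ι, (LinearMap.trace K (V i)) (Algebra.lsmul K K (V i) (u j (z j) (z j)))
        = if i = j then 1 else 0 := by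
      intro i
      rw [hΦlsmul, hΦu]
      by_cases hij : i = j
      · subst hij
        rw [Pi.single_eq_same, hEtrace]
        simp
      · rw [Pi.single_eq_of_ne hij, map_zero, if_neg hij]
    have h5 := hs' (u j (z j) (z j))
    rw [hmain] at h5
    simp only [hval, mul_ite, mul_one, mul_zero, Finset.sum_ite_eq', Finset.mem_univ,
      if_true] at h5
    show s' j = (c j)⁻¹
    rw [h5, inv_inv]
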